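/- Let K ⊆ E(R,I) be an ideal with associated data A, J, Z, φ as in the structure theorem for ideals of E(R,I). Then K is nilpotent if and only if both A and J are nilpotent, if and only if both A and ker(φ) are nilpotent. The same equivalences hold with 'nil' in place of 'nilpotent'. -/

import Mathlib

open MulOpposite

/-- The underlying type of the Dorroh (ideal) extension `E(R,I)`. -/
@[ext]
structure Dorroh (R : Type*) (I : Type*) where
  fst : R
  snd : I

/-- `I` is an `R`-rng: a nonunital ring with a compatible `(R,R)`-bimodule structure. -/
class IsRRng (R I : Type*) [Ring R] [NonUnitalRing I] [Module R I] [Module Rᵐᵒᵖ I] : Prop where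
  smul_op_smul : ∀ (r : R) (s : Rᵐᵒᵖ) (x : I), r • s • x = s • r • x
  smul_mul : ∀ (r : R) (x y : I), r • (x * y) = (r • x) * y
  mul_smul_eq : ∀ (r : R) (x y : I), x * (r • y) = (op r • x) * y
  op_smul_mul : ∀ (r : R) (x y : I), op r • (x * y) = x * (op r • y)

namespace Dorroh

variable {R I : Type*} [Ring R] [NonUnitalRing I] [Module R I] [Module Rᵐᵒᵖ I] [IsRRng R I]

instance : Add (Dorroh R I) := ⟨fun p q => ⟨p.fst + q.fst, p.snd + q.snd⟩⟩
instance : Zero (Dorroh R I) := ⟨⟨0, 0⟩⟩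
instance : Neg (Dorroh R I) := ⟨fun p => ⟨-p.fst, -p.snd⟩⟩
instance : Mul (Dorroh R I) :=
  ⟨fun p q => ⟨p.fst * q.fst, op q.fst • p.snd + p.fst • q.snd + p.snd * q.snd⟩⟩
instance : One (Dorroh R I) := ⟨⟨1, 0⟩⟩

set_option linter.unusedSectionVars false

@[simp] theorem add_fst (p q : Dorroh R I) : (p + q).fst = p.fst + q.fst := rfl
@[simp] theorem add_snd (p q : Dorroh R I) : (p + q).snd = p.snd + q.snd := rfl
@[simp] theorem zero_fst : (0 : Dorroh R I).fst = 0 := rfl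
@[simp] theorem zero_snd : (0 : Dorroh R I).snd = 0 := rfl
@[simp] theorem neg_fst (p : Dorroh R I) : (-p).fst = -p.fst := rfl
@[simp] theorem neg_snd (p : Dorroh R I) : (-p).snd = -p.snd := rfl
@[simp] theorem mul_fst (p q : Dorroh R I) : (p * q).fst = p.fst * q.fst := rfl
@[simp] theorem mul_snd (p q : Dorroh R I) :
    (p * q).snd = op q.fst • p.snd + p.fst • q.snd + p.snd * q.snd := rfl
@[simp] theorem one_fst : (1 : Dorroh R I).fst = 1 := rfl
@[simp] theorem one_snd : (1 : Dorroh R I).snd = 0 := rfl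

instance : Ring (Dorroh R I) where
  add_assoc a b c := by ext <;> simp [add_assoc]
  zero_add a := by ext <;> simp
  add_zero a := by ext <;> simp
  add_comm a b := by ext <;> simp [add_comm]
  neg_add_cancel a := by ext <;> simp
  mul_assoc a b c := by
    ext
    · simp [mul_assoc]
    · simp only [mul_snd, mul_fst, smul_add, mul_smul, op_mul, mul_add, add_mul,
        IsRRng.smul_mul, IsRRng.op_smul_mul, IsRRng.smul_op_smul, mul_assoc]
      rw [← IsRRng.mul_smul_eq]
      abel
  one_mul a := by ext <;> simp
  mul_one a := by ext <;> simp
  left_distrib a b c := by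
    ext
    · simp [mul_add]
    · simp [op_add, add_smul, smul_add, mul_add]
      abel
  right_distrib a b c := by
    ext
    · simp [add_mul]
    · simp [op_add, add_smul, smul_add, add_mul]
      abel
  zero_mul a := by ext <;> simp
  mul_zero a := by ext <;> simp
  nsmul := nsmulRec
  zsmul := zsmulRec

theorem mul_def (p q : Dorroh R I) :
    p * q = ⟨p.fst * q.fst, op q.fst • p.snd + p.fst • q.snd + p.snd * q.snd⟩ := rfl

theorem one_def : (1 : Dorroh R I) = ⟨1, 0⟩ := rfl

theorem add_def (p q : Dorroh R I) : p + q = ⟨p.fst + q.fst, p.snd + q.snd⟩ := rfl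

end Dorroh

/-- An `R`-subrng of the `R`-rng `I`: an `(R,R)`-subbimodule closed under multiplication. -/
def IsRSubrng (R : Type*) {I : Type*} [Ring R] [NonUnitalRing I] [Module R I]
    [Module Rᵐᵒᵖ I] (J : Set I) : Prop :=
  (0 : I) ∈ J ∧ (∀ x ∈ J, ∀ y ∈ J, x + y ∈ J) ∧ (∀ x ∈ J, -x ∈ J) ∧
    (∀ x ∈ J, ∀ y ∈ J, x * y ∈ J) ∧ (∀ (r : R), ∀ x ∈ J, r • x ∈ J) ∧
    (∀ (r : R), ∀ x ∈ J, op r • x ∈ J)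

/-- An `R`-ideal of the `R`-rng `I`: an `(R,R)`-subbimodule that is an ideal of `I`. -/
def IsRIdeal (R : Type*) {I : Type*} [Ring R] [NonUnitalRing I] [Module R I]
    [Module Rᵐᵒᵖ I] (J : Set I) : Prop :=
  IsRSubrng R J ∧ ∀ (i : I), ∀ j ∈ J, i * j ∈ J ∧ j * i ∈ J

/-- The annihilator `ann_R(I) = {r : R | rI = Ir = 0}`. -/
def annR (R I : Type*) [Ring R] [NonUnitalRing I] [Module R I] [Module Rᵐᵒᵖ I] : Set R :=
  {r : R | ∀ x : I, r • x = 0 ∧ op r • x = 0}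

/-- An element `x` of a rng is left quasi-regular if `x + k + kx = 0` for some `k`. -/
def IsLQR {I : Type*} [NonUnitalRing I] (x : I) : Prop := ∃ k : I, x + k + k * x = 0

/-- The Jacobson radical of a rng. -/
def rngRad (I : Type*) [NonUnitalRing I] : Set I := {x : I | ∀ j : I, IsLQR (j * x)}

/-- `npowNZ x n = x ^ (n+1)` in a nonunital ring. -/
def npowNZ {I : Type*} [NonUnitalRing I] (x : I) : ℕ → I
  | 0 => x
  | n + 1 => npowNZ x n * x

/-- An element of a rng is nilpotent if some positive power of it is zero. -/
def IsNilElem {I : Type*} [NonUnitalRing I] (x : I) : Prop := ∃ n : ℕ, npowNZ x n = 0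

/-- A subset of a rng is nil if each of its elements is nilpotent. -/
def SetIsNil {I : Type*} [NonUnitalRing I] (S : Set I) : Prop := ∀ x ∈ S, IsNilElem x

/-- A subset of a rng is nilpotent if for some `n` every product of `n+1` of its
elements vanishes. -/
def SetIsNilpotent {I : Type*} [NonUnitalRing I] (S : Set I) : Prop :=
  ∃ n : ℕ, ∀ (x : I) (l : List I), x ∈ S → (∀ y ∈ l, y ∈ S) → l.length = n →
    l.foldl (· * ·) x = 0

/-- The upper nil radical of a rng: the sum of all of its nil (two-sided) ideals. -/
def upperNil (I : Type*) [NonUnitalRing I] : Set I :=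
  ((sSup {J : TwoSidedIdeal I | ∀ x ∈ J, IsNilElem x} : TwoSidedIdeal I) : Set I)

/-- A rng is semiprime if it has no nonzero ideal of square zero. -/
def IsSemiprimeRng (I : Type*) [NonUnitalRing I] : Prop :=
  ∀ J : TwoSidedIdeal I, (∀ x ∈ J, ∀ y ∈ J, x * y = 0) → J = ⊥

/-- A rng is prime if the product of any two nonzero ideals is nonzero. -/
def IsPrimeRng (I : Type*) [NonUnitalRing I] : Prop :=
  ∀ J K : TwoSidedIdeal I, (∀ x ∈ J, ∀ y ∈ K, x * y = 0) → J = ⊥ ∨ K = ⊥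

/-- `ψ : I → R` restricts to an `R`-homomorphism on the subset `J ⊆ I`. -/
def IsRHomOn (R : Type*) {I : Type*} [Ring R] [NonUnitalRing I] [Module R I]
    [Module Rᵐᵒᵖ I] (J : Set I) (ψ : I → R) : Prop :=
  (∀ x ∈ J, ∀ y ∈ J, ψ (x + y) = ψ x + ψ y) ∧
    (∀ x ∈ J, ∀ y ∈ J, ψ (x * y) = ψ x * ψ y) ∧
    (∀ (r : R), ∀ x ∈ J, ψ (r • x) = r * ψ x) ∧
    (∀ (r : R), ∀ x ∈ J, ψ (op r • x) = ψ x * r)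

/-- `φ : I → R` is an `R`-homomorphism. -/
def IsRHom (R : Type*) {I : Type*} [Ring R] [NonUnitalRing I] [Module R I]
    [Module Rᵐᵒᵖ I] (φ : I → R) : Prop :=
  (∀ x y : I, φ (x + y) = φ x + φ y) ∧ (∀ x y : I, φ (x * y) = φ x * φ y) ∧
    (∀ (r : R) (x : I), φ (r • x) = r * φ x) ∧ (∀ (r : R) (x : I), φ (op r • x) = φ x * r)

/-- A two-sided ideal `P` of a ring is prime if `AB ⊆ P` implies `A ⊆ P` or `B ⊆ P`
for all two-sided ideals `A`, `B`. -/
def TsiPrime {S : Type*} [Ring S] (P : TwoSidedIdeal S) : Prop :=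
  ∀ A B : TwoSidedIdeal S, (∀ a ∈ A, ∀ b ∈ B, a * b ∈ P) → A ≤ P ∨ B ≤ P

/-- A two-sided ideal is maximal if it is a maximal proper ideal. -/
def TsiMaximal {S : Type*} [Ring S] (P : TwoSidedIdeal S) : Prop :=
  P ≠ ⊤ ∧ ∀ Q : TwoSidedIdeal S, P ≤ Q → Q = P ∨ Q = ⊤

/-- A two-sided-ideal subset of a ring. -/
def IsTwoSidedIdealSet (R : Type*) [Ring R] (P : Set R) : Prop :=
  (0 : R) ∈ P ∧ (∀ x ∈ P, ∀ y ∈ P, x + y ∈ P) ∧ (∀ x ∈ P, -x ∈ P) ∧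
    (∀ (r : R), ∀ x ∈ P, r * x ∈ P ∧ x * r ∈ P)

/-- A subset `P` of `R` is a prime ideal if it is a two-sided ideal and `AB ⊆ P`
implies `A ⊆ P` or `B ⊆ P` for all two-sided ideals `A, B`. -/
def IsPrimeIdealSet (R : Type*) [Ring R] (P : Set R) : Prop :=
  IsTwoSidedIdealSet R P ∧ ∀ A B : TwoSidedIdeal R,
    (∀ a ∈ A, ∀ b ∈ B, a * b ∈ P) → ((A : Set R) ⊆ P ∨ (B : Set R) ⊆ P)

/-- A subset `P` of `R` is a semiprime ideal if it is a two-sided ideal and `A² ⊆ P`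
implies `A ⊆ P` for all two-sided ideals `A`. -/
def IsSemiprimeIdealSet (R : Type*) [Ring R] (P : Set R) : Prop :=
  IsTwoSidedIdealSet R P ∧ ∀ A : TwoSidedIdeal R,
    (∀ a ∈ A, ∀ b ∈ A, a * b ∈ P) → (A : Set R) ⊆ P

section IdealData

variable (R I : Type*) [Ring R] [NonUnitalRing I] [Module R I] [Module Rᵐᵒᵖ I] [IsRRng R I]

/-- The data describing an ideal of `E(R,I)`: ideals `Z ⊆ A` of `R`, an `R`-subrng `J ⊆ I`,
and a surjective `R`-homomorphism `φ : J → A/Z` (represented by a set-map `ψ : I → R`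
choosing representatives), satisfying conditions (a) `ai - ji ∈ ker φ` and
(b) `ia - ij ∈ ker φ` for all `(a,-j) ∈ K`, `i ∈ I`. -/
def DorrohIdealData (A Z : TwoSidedIdeal R) (J : Set I) (ψ : I → R) : Prop :=
  Z ≤ A ∧ IsRSubrng R J ∧
    (∀ x ∈ J, ∀ y ∈ J, ψ (x + y) - (ψ x + ψ y) ∈ Z) ∧
    (∀ x ∈ J, ∀ y ∈ J, ψ (x * y) - ψ x * ψ y ∈ Z) ∧
    (∀ (r : R), ∀ x ∈ J, ψ (r • x) - r * ψ x ∈ Z) ∧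
    (∀ (r : R), ∀ x ∈ J, ψ (op r • x) - ψ x * r ∈ Z) ∧
    (∀ j ∈ J, ψ j ∈ A) ∧
    (∀ a ∈ A, ∃ j ∈ J, a - ψ j ∈ Z) ∧
    (∀ (a : R), ∀ j ∈ J, a ∈ A → a - ψ j ∈ Z → ∀ i : I,
      (a • i - j * i ∈ J ∧ ψ (a • i - j * i) ∈ Z) ∧
      (op a • i - i * j ∈ J ∧ ψ (op a • i - i * j) ∈ Z))

/-- The subset `K = {(a, -j) : a ∈ A, j ∈ J, a + Z = φ(j)}` of `E(R,I)`. -/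
def DorrohIdealSet (A Z : TwoSidedIdeal R) (J : Set I) (ψ : I → R) : Set (Dorroh R I) :=
  {p : Dorroh R I | p.fst ∈ A ∧ -p.snd ∈ J ∧ p.fst - ψ (-p.snd) ∈ Z}

end IdealData

variable (R I : Type*) [Ring R] [NonUnitalRing I] [Module R I] [Module Rᵐᵒᵖ I] [IsRRng R I]

open MulOpposite


section NilpAux

/-! ### Generic list / foldl auxiliary lemmas -/

private lemma foldl_mul_assoc {M : Type*} [Semigroup M] (l : List M) (a b : M) :
    l.foldl (· * ·) (a * b) = a * l.foldl (· * ·) b := by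
  induction l generalizing b with
  | nil => rfl
  | cons h t ih => simp only [List.foldl_cons, mul_assoc, ih]

private lemma foldl_chunks {M : Type*} [Semigroup M] (S T : Set M) (a : ℕ)
    (hST : ∀ x ∈ S, ∀ l : List M, (∀ y ∈ l, y ∈ S) → l.length = a →
      l.foldl (· * ·) x ∈ T) :
    ∀ (k : ℕ) (r : List M), (∀ y ∈ r, y ∈ S) → r.length = (a + 1) * k →
      ∃ ts : List M, (∀ u ∈ ts, u ∈ T) ∧ ts.length = k ∧
        ∀ p : M, r.foldl (· * ·) p = ts.foldl (· * ·) p := by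
  intro k
  induction k with
  | zero =>
    intro r hr hl
    have : r = [] := List.length_eq_zero_iff.mp (by simpa using hl)
    exact ⟨[], by simp, rfl, fun p => by simp [this]⟩
  | succ k ih =>
    intro r hr hl
    have hsplit : r = r.take (a + 1) ++ r.drop (a + 1) := (List.take_append_drop _ _).symm
    have hlen1 : (r.take (a + 1)).length = a + 1 := by
      rw [List.length_take, hl]; exact min_eq_left (by nlinarith)
    have hlen2 : (r.drop (a + 1)).length = (a + 1) * k := by
      rw [List.length_drop, hl]; ring_nf; omega
    obtain ⟨h, t, hht⟩ : ∃ h t, r.take (a + 1) = h :: t := by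
      cases htk : r.take (a + 1) with
      | nil => rw [htk] at hlen1; simp at hlen1
      | cons h t => exact ⟨h, t, rfl⟩
    have hmem1 : ∀ y ∈ r.take (a + 1), y ∈ S := fun y hy => hr y (List.mem_of_mem_take hy)
    have hmem2 : ∀ y ∈ r.drop (a + 1), y ∈ S := fun y hy => hr y (List.mem_of_mem_drop hy)
    have hhS : h ∈ S := hmem1 h (by rw [hht]; exact List.mem_cons_self)
    have htS : ∀ y ∈ t, y ∈ S := fun y hy => hmem1 y (by rw [hht]; exact List.mem_cons_of_mem _ hy)
    have htlen : t.length = a := by rw [hht] at hlen1; simpa using hlen1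
    have hblock : t.foldl (· * ·) h ∈ T := hST h hhS t htS htlen
    obtain ⟨ts, htsT, htslen, htsfold⟩ := ih (r.drop (a + 1)) hmem2 hlen2
    refine ⟨t.foldl (· * ·) h :: ts, ?_, by simp [htslen], fun p => ?_⟩
    · intro u hu
      rcases List.mem_cons.mp hu with h1 | h1
      · rw [h1]; exact hblock
      · exact htsT u h1
    · conv_lhs => rw [hsplit]
      rw [List.foldl_append, hht, List.foldl_cons, foldl_mul_assoc, List.foldl_cons,
        ← htsfold (p * t.foldl (· * ·) h), ← foldl_mul_assoc]

private lemma nilpotent_compose {M : Type*} [NonUnitalRing M] (S T : Set M) (a b : ℕ)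
    (hST : ∀ x ∈ S, ∀ l : List M, (∀ y ∈ l, y ∈ S) → l.length = a →
      l.foldl (· * ·) x ∈ T)
    (hT : ∀ x ∈ T, ∀ l : List M, (∀ y ∈ l, y ∈ T) → l.length = b →
      l.foldl (· * ·) x = 0) :
    ∀ x ∈ S, ∀ l : List M, (∀ y ∈ l, y ∈ S) → l.length = a + (a + 1) * b →
      l.foldl (· * ·) x = 0 := by
  intro x hx l hl hlen
  have hsplit : l = l.take a ++ l.drop a := (List.take_append_drop _ _).symm
  have hlen1 : (l.take a).length = a := by
    rw [List.length_take, hlen]; exact min_eq_left (by nlinarith)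
  have hlen2 : (l.drop a).length = (a + 1) * b := by
    rw [List.length_drop, hlen]; omega
  have hmem1 : ∀ y ∈ l.take a, y ∈ S := fun y hy => hl y (List.mem_of_mem_take hy)
  have hmem2 : ∀ y ∈ l.drop a, y ∈ S := fun y hy => hl y (List.mem_of_mem_drop hy)
  have hq : (l.take a).foldl (· * ·) x ∈ T := hST x hx _ hmem1 hlen1
  obtain ⟨ts, htsT, htslen, htsfold⟩ := foldl_chunks S T a hST b (l.drop a) hmem2 hlen2
  conv_lhs => rw [hsplit]
  rw [List.foldl_append, htsfold]
  exact hT _ hq ts htsT htslen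

/-! ### npowNZ auxiliary lemmas -/

private lemma npowNZ_add {M : Type*} [NonUnitalRing M] (x : M) (a b : ℕ) :
    npowNZ x (a + b + 1) = npowNZ x a * npowNZ x b := by
  induction b with
  | zero => rfl
  | succ b ih =>
    show npowNZ x (a + b + 1) * x = _
    rw [ih]
    show _ = npowNZ x a * (npowNZ x b * x)
    rw [mul_assoc]

private lemma npowNZ_comp {M : Type*} [NonUnitalRing M] (x : M) (n m : ℕ) :
    npowNZ (npowNZ x n) m = npowNZ x ((m + 1) * n + m) := by
  induction m with
  | zero => simp [npowNZ]
  | succ m ih =>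
    show npowNZ (npowNZ x n) m * npowNZ x n = _
    rw [ih, ← npowNZ_add]
    congr 1
    ring

end NilpAux

section DorrohAux

variable {R I : Type*} [Ring R] [NonUnitalRing I] [Module R I] [Module Rᵐᵒᵖ I] [IsRRng R I]

private lemma fst_foldl (x : Dorroh R I) (l : List (Dorroh R I)) :
    (l.foldl (· * ·) x).fst = (l.map Dorroh.fst).foldl (· * ·) x.fst := by
  induction l generalizing x with
  | nil => rfl
  | cons h t ih =>
    rw [List.map_cons, List.foldl_cons, List.foldl_cons, ih, Dorroh.mul_fst]

private lemma fst_npowNZ (x : Dorroh R I) (n : ℕ) :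
    (npowNZ x n).fst = npowNZ x.fst n := by
  induction n with
  | zero => rfl
  | succ n ih => show (npowNZ x n * x).fst = npowNZ x.fst n * x.fst; rw [Dorroh.mul_fst, ih]

private lemma gmul (y z : I) :
    (⟨0, y⟩ : Dorroh R I) * ⟨0, z⟩ = ⟨0, y * z⟩ := by
  ext
  · simp
  · show MulOpposite.op (0 : R) • y + (0 : R) • z + y * z = y * z
    simp

private lemma g_foldl (x : I) (l : List I) :
    (l.map (fun y => (⟨0, y⟩ : Dorroh R I))).foldl (· * ·) ⟨0, x⟩ =
      ⟨0, l.foldl (· * ·) x⟩ := by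
  induction l generalizing x with
  | nil => rfl
  | cons h t ih => rw [List.map_cons, List.foldl_cons, List.foldl_cons, gmul, ih]

private lemma g_npowNZ (x : I) (n : ℕ) :
    npowNZ (⟨0, x⟩ : Dorroh R I) n = ⟨0, npowNZ x n⟩ := by
  induction n with
  | zero => rfl
  | succ n ih =>
    show npowNZ (⟨0, x⟩ : Dorroh R I) n * ⟨0, x⟩ = _
    rw [ih, gmul]
    rfl

end DorrohAux
/-- For an ideal `K` of `E(R,I)` with associated data `A`, `J`, `Z`, `ψ`, the ideal `K`
is nilpotent (resp. nil) iff `A` and `J` are, iff `A` and `ker φ` are. -/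
theorem dorroh_ideal_nilpotent_iff (A Z : TwoSidedIdeal R) (J : Set I) (ψ : I → R)
    (hdata : DorrohIdealData R I A Z J ψ) :
    (SetIsNilpotent (DorrohIdealSet R I A Z J ψ) ↔
      (SetIsNilpotent (A : Set R) ∧ SetIsNilpotent J)) ∧
    (SetIsNilpotent (DorrohIdealSet R I A Z J ψ) ↔
      (SetIsNilpotent (A : Set R) ∧ SetIsNilpotent {x : I | x ∈ J ∧ ψ x ∈ Z})) ∧
    (SetIsNil (DorrohIdealSet R I A Z J ψ) ↔
      (SetIsNil (A : Set R) ∧ SetIsNil J)) ∧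
    (SetIsNil (DorrohIdealSet R I A Z J ψ) ↔
      (SetIsNil (A : Set R) ∧ SetIsNil {x : I | x ∈ J ∧ ψ x ∈ Z})) := by
  obtain ⟨hZA, ⟨hJ0, hJadd, hJneg, hJmul, hJsmul, hJop⟩,
    hψadd, hψmul, hψsmul, hψop, hψA, hsurj, -⟩ := hdata
  set K : Set (Dorroh R I) := DorrohIdealSet R I A Z J ψ with hKdef
  set N : Set I := {x : I | x ∈ J ∧ ψ x ∈ Z} with hNdef
  have hKmem : ∀ p : Dorroh R I,
      p ∈ K ↔ (p.fst ∈ A ∧ -p.snd ∈ J ∧ p.fst - ψ (-p.snd) ∈ Z) := fun _ => Iff.rfl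
  have hNmem : ∀ x : I, x ∈ N ↔ (x ∈ J ∧ ψ x ∈ Z) := fun _ => Iff.rfl
  -- `N` is closed under negation
  have hNneg : ∀ x ∈ N, -x ∈ N := by
    rintro x ⟨hxJ, hxZ⟩
    refine ⟨hJneg x hxJ, ?_⟩
    have h := hψsmul (-1) x hxJ
    rw [neg_one_smul] at h
    have key : ψ (-x) = (ψ (-x) - (-1) * ψ x) + (-1) * ψ x := by noncomm_ring
    rw [key]
    exact Z.add_mem h (Z.mul_mem_left _ _ hxZ)
  -- lifting elements of `N` into `K`
  have glift : ∀ x ∈ N, (⟨0, x⟩ : Dorroh R I) ∈ K := by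
    rintro x hx
    refine ⟨A.zero_mem, (hNneg x hx).1, ?_⟩
    show (0 : R) - ψ (-x) ∈ Z
    rw [zero_sub]
    exact Z.neg_mem (hNneg x hx).2
  -- `K` is closed under multiplication
  have hKmul : ∀ p ∈ K, ∀ q ∈ K, p * q ∈ K := by
    rintro ⟨a, s⟩ ⟨hpA, hpJ, hpZ⟩ ⟨a', s'⟩ ⟨hqA, hqJ, hqZ⟩
    have hpA : a ∈ A := hpA
    have hpJ : -s ∈ J := hpJ
    have hpZ : a - ψ (-s) ∈ Z := hpZ
    have hqA : a' ∈ A := hqA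
    have hqJ : -s' ∈ J := hqJ
    have hqZ : a' - ψ (-s') ∈ Z := hqZ
    have harg : -(op a' • s + a • s' + s * s')
        = op a' • -s + a • -s' + -(-s * -s') := by
      rw [smul_neg, smul_neg, neg_mul_neg]
      abel
    have hw1 : op a' • -s ∈ J := hJop a' (-s) hpJ
    have hw2 : a • -s' ∈ J := hJsmul a (-s') hqJ
    have hw3 : -s * -s' ∈ J := hJmul (-s) hpJ (-s') hqJ
    have hw3n : -(-s * -s') ∈ J := hJneg _ hw3
    have hw12 : op a' • -s + a • -s' ∈ J := hJadd _ hw1 _ hw2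
    have hw : op a' • -s + a • -s' + -(-s * -s') ∈ J := hJadd _ hw12 _ hw3n
    refine ⟨?_, ?_, ?_⟩
    · show a * a' ∈ A
      exact A.mul_mem_right _ _ hpA
    · show -(op a' • s + a • s' + s * s') ∈ J
      rw [harg]; exact hw
    · show a * a' - ψ (-(op a' • s + a • s' + s * s')) ∈ Z
      rw [harg]
      have h2 := hψadd _ hw12 _ hw3n
      have h1 := hψadd _ hw1 _ hw2
      have h3 := hψop a' (-s) hpJ
      have h4 := hψsmul a (-s') hqJ
      have h5 : ψ (-(-s * -s')) - (-1) * ψ (-s * -s') ∈ Z := by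
        have := hψsmul (-1) _ hw3
        rwa [neg_one_smul] at this
      have h6 := hψmul (-s) hpJ (-s') hqJ
      have key : a * a' - ψ (op a' • -s + a • -s' + -(-s * -s'))
          = (((((-(ψ (op a' • -s + a • -s' + -(-s * -s'))
                    - (ψ (op a' • -s + a • -s') + ψ (-(-s * -s'))))
              + -(ψ (op a' • -s + a • -s') - (ψ (op a' • -s) + ψ (a • -s'))))
              + -(ψ (op a' • -s) - ψ (-s) * a'))
              + -(ψ (a • -s') - a * ψ (-s')))
              + -(ψ (-(-s * -s')) - (-1) * ψ (-s * -s')))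
              + (ψ (-s * -s') - ψ (-s) * ψ (-s')))
              + (a - ψ (-s)) * (a' - ψ (-s')) := by noncomm_ring
      rw [key]
      exact Z.add_mem (Z.add_mem (Z.add_mem (Z.add_mem (Z.add_mem (Z.add_mem
        (Z.neg_mem h2) (Z.neg_mem h1)) (Z.neg_mem h3)) (Z.neg_mem h4))
        (Z.neg_mem h5)) h6) (Z.mul_mem_right _ _ hpZ)
  -- products of elements of `K` stay in `K`
  have hKfold : ∀ x ∈ K, ∀ l : List (Dorroh R I), (∀ y ∈ l, y ∈ K) →
      l.foldl (· * ·) x ∈ K := by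
    intro x hx l
    induction l generalizing x with
    | nil => intro _; exact hx
    | cons h t ih =>
      intro hl
      exact ih (x * h) (hKmul x hx h (hl h (List.mem_cons_self)))
        (fun y hy => hl y (List.mem_cons_of_mem _ hy))
  have hKnpow : ∀ p ∈ K, ∀ n : ℕ, npowNZ p n ∈ K := by
    intro p hp n
    induction n with
    | zero => exact hp
    | succ n ih => exact hKmul _ ih _ hp
  -- an element of `K` with zero first component has second component in `N`
  have hsnd0 : ∀ p ∈ K, p.fst = 0 → p.snd ∈ N := by
    rintro p ⟨hpA, hpJ, hpZ⟩ hp0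
    rw [hp0, zero_sub] at hpZ
    have h1 : -p.snd ∈ N := ⟨hpJ, by
      have := Z.neg_mem hpZ; rwa [neg_neg] at this⟩
    have := hNneg _ h1
    rwa [neg_neg] at this
  -- lifting elements of `A` into `K`
  have hlift : ∀ a ∈ A, ∃ p : Dorroh R I, p ∈ K ∧ p.fst = a := by
    intro a ha
    obtain ⟨j, hjJ, hjZ⟩ := hsurj a ha
    refine ⟨⟨a, -j⟩, ⟨ha, ?_, ?_⟩, rfl⟩
    · show -(-j) ∈ J; rwa [neg_neg]
    · show a - ψ (-(-j)) ∈ Z; rwa [neg_neg]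
  choose pf hpfK hpffst using hlift
  -- ψ of products mod Z
  have hfoldsub : ∀ (m : List R) (u v : R), u - v ∈ Z →
      m.foldl (· * ·) u - m.foldl (· * ·) v ∈ Z := by
    intro m
    induction m with
    | nil => intro u v h; exact h
    | cons h t ih =>
      intro u v huv
      refine ih (u * h) (v * h) ?_
      rw [← sub_mul]
      exact Z.mul_mem_right _ _ huv
  have hfoldJ : ∀ (l : List I) (x : I), x ∈ J → (∀ y ∈ l, y ∈ J) →
      l.foldl (· * ·) x ∈ J ∧
        ψ (l.foldl (· * ·) x) - (l.map ψ).foldl (· * ·) (ψ x) ∈ Z := by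
    intro l
    induction l with
    | nil =>
      intro x hx _
      refine ⟨hx, ?_⟩
      show ψ x - ψ x ∈ Z
      rw [sub_self]; exact Z.zero_mem
    | cons h t ih =>
      intro x hx hl
      have hhJ : h ∈ J := hl h (List.mem_cons_self)
      have htl : ∀ y ∈ t, y ∈ J := fun y hy => hl y (List.mem_cons_of_mem _ hy)
      obtain ⟨m1, m2⟩ := ih (x * h) (hJmul x hx h hhJ) htl
      refine ⟨m1, ?_⟩
      have h3 : (t.map ψ).foldl (· * ·) (ψ (x * h))
          - (t.map ψ).foldl (· * ·) (ψ x * ψ h) ∈ Z :=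
        hfoldsub _ _ _ (hψmul x hx h hhJ)
      have key : ψ (t.foldl (· * ·) (x * h)) - (t.map ψ).foldl (· * ·) (ψ x * ψ h)
          = (ψ (t.foldl (· * ·) (x * h)) - (t.map ψ).foldl (· * ·) (ψ (x * h)))
            + ((t.map ψ).foldl (· * ·) (ψ (x * h))
              - (t.map ψ).foldl (· * ·) (ψ x * ψ h)) := by noncomm_ring
      show ψ (t.foldl (· * ·) (x * h)) - (t.map ψ).foldl (· * ·) (ψ x * ψ h) ∈ Z
      rw [key]
      exact Z.add_mem m2 h3
  have hψnpow : ∀ j ∈ J, ∀ n : ℕ, npowNZ j n ∈ J ∧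
      ψ (npowNZ j n) - npowNZ (ψ j) n ∈ Z := by
    intro j hj n
    induction n with
    | zero =>
      refine ⟨hj, ?_⟩
      show ψ j - ψ j ∈ Z
      rw [sub_self]; exact Z.zero_mem
    | succ n ih =>
      obtain ⟨m1, m2⟩ := ih
      refine ⟨hJmul _ m1 _ hj, ?_⟩
      have h1 := hψmul _ m1 _ hj
      have key : ψ (npowNZ j n * j) - npowNZ (ψ j) n * ψ j
          = (ψ (npowNZ j n * j) - ψ (npowNZ j n) * ψ j)
            + (ψ (npowNZ j n) - npowNZ (ψ j) n) * ψ j := by noncomm_ring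
      show ψ (npowNZ j n * j) - npowNZ (ψ j) n * ψ j ∈ Z
      rw [key]
      exact Z.add_mem h1 (Z.mul_mem_right _ _ m2)
  -- main implications, nilpotent case
  have H1 : SetIsNilpotent K → SetIsNilpotent (A : Set R) := by
    rintro ⟨n, hn⟩
    refine ⟨n, fun a l ha hl hlen => ?_⟩
    have haA : a ∈ A := ha
    classical
    set f : R → Dorroh R I := fun r => if h : r ∈ A then pf r h else 0 with hfdef
    have hfK : ∀ r ∈ A, f r ∈ K := fun r hr => by
      simp only [hfdef, dif_pos hr]; exact hpfK r hr
    have hffst : ∀ r ∈ A, (f r).fst = r := fun r hr => by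
      simp only [hfdef, dif_pos hr]; exact hpffst r hr
    have h0 := hn (f a) (l.map f) (hfK a haA)
      (fun y hy => by
        obtain ⟨z, hz, rfl⟩ := List.mem_map.mp hy
        exact hfK z (hl z hz))
      (by simpa using hlen)
    have h2 := congrArg Dorroh.fst h0
    rw [fst_foldl, List.map_map] at h2
    have h3 : l.map (Dorroh.fst ∘ f) = l := by
      have : l.map (Dorroh.fst ∘ f) = l.map id :=
        List.map_congr_left fun y hy => hffst y (hl y hy)
      rw [this, List.map_id]
    rw [h3, hffst a haA] at h2
    exact h2
  have H2 : SetIsNilpotent K → SetIsNilpotent N := by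
    rintro ⟨n, hn⟩
    refine ⟨n, fun x l hx hl hlen => ?_⟩
    have h0 := hn ⟨0, x⟩ (l.map fun y => (⟨0, y⟩ : Dorroh R I)) (glift x hx)
      (fun y hy => by
        obtain ⟨z, hz, rfl⟩ := List.mem_map.mp hy
        exact glift z (hl z hz))
      (by simpa using hlen)
    rw [g_foldl] at h0
    exact congrArg Dorroh.snd h0
  have H3 : SetIsNilpotent (A : Set R) → SetIsNilpotent N → SetIsNilpotent K := by
    rintro ⟨nA, hA⟩ ⟨nN, hN⟩
    refine ⟨nA + (nA + 1) * nN, fun x l hx hl hlen => ?_⟩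
    refine nilpotent_compose K {p : Dorroh R I | p ∈ K ∧ p.fst = 0} nA nN
      ?_ ?_ x hx l hl hlen
    · intro y hy m hm hmlen
      refine ⟨hKfold y hy m hm, ?_⟩
      rw [fst_foldl]
      exact hA y.fst (m.map Dorroh.fst) ((hKmem y).mp hy).1
        (fun z hz => by
          obtain ⟨w, hw, rfl⟩ := List.mem_map.mp hz
          exact ((hKmem w).mp (hm w hw)).1)
        (by simpa using hmlen)
    · rintro y ⟨hyK, hy0⟩ m hm hmlen
      have hsndN : ∀ p : Dorroh R I, p ∈ K ∧ p.fst = 0 → p.snd ∈ N :=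
        fun p hp => hsnd0 p hp.1 hp.2
      have hyeq : y = (⟨0, y.snd⟩ : Dorroh R I) := by
        ext
        · exact hy0
        · rfl
      have hmeq : m = (m.map Dorroh.snd).map (fun z => (⟨0, z⟩ : Dorroh R I)) := by
        rw [List.map_map]
        conv_lhs => rw [← List.map_id m]
        exact List.map_congr_left fun p hp => by
          obtain ⟨h1, h2⟩ := hm p hp
          show p = (⟨0, p.snd⟩ : Dorroh R I)
          ext
          · exact h2
          · rfl
      rw [hyeq, hmeq, g_foldl]
      have := hN y.snd (m.map Dorroh.snd) (hsndN y ⟨hyK, hy0⟩)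
        (fun z hz => by
          obtain ⟨w, hw, rfl⟩ := List.mem_map.mp hz
          exact hsndN w (hm w hw))
        (by simpa using hmlen)
      rw [this]
      rfl
  have H4 : SetIsNilpotent (A : Set R) → SetIsNilpotent N → SetIsNilpotent J := by
    rintro ⟨nA, hA⟩ ⟨nN, hN⟩
    refine ⟨nA + (nA + 1) * nN, fun x l hx hl hlen => ?_⟩
    refine nilpotent_compose J N nA nN ?_ ?_ x hx l hl hlen
    · intro y hy m hm hmlen
      obtain ⟨m1, m2⟩ := hfoldJ m y hy hm
      refine ⟨m1, ?_⟩
      have h0 : (m.map ψ).foldl (· * ·) (ψ y) = 0 :=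
        hA (ψ y) (m.map ψ) (hψA y hy)
          (fun z hz => by
            obtain ⟨w, hw, rfl⟩ := List.mem_map.mp hz
            exact hψA w (hm w hw))
          (by simpa using hmlen)
      rw [h0, sub_zero] at m2
      exact m2
    · exact fun y hy m hm hmlen => hN y m hy hm hmlen
  have H5 : SetIsNilpotent J → SetIsNilpotent N := by
    rintro ⟨n, hn⟩
    exact ⟨n, fun x l hx hl hlen => hn x l hx.1 (fun y hy => (hl y hy).1) hlen⟩
  -- main implications, nil case
  have G1 : SetIsNil K → SetIsNil (A : Set R) := by
    intro h a ha
    obtain ⟨n, hn⟩ := h (pf a ha) (hpfK a ha)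
    refine ⟨n, ?_⟩
    have h2 := congrArg Dorroh.fst hn
    rwa [fst_npowNZ, hpffst a ha] at h2
  have G2 : SetIsNil K → SetIsNil N := by
    intro h x hx
    obtain ⟨n, hn⟩ := h ⟨0, x⟩ (glift x hx)
    rw [g_npowNZ] at hn
    exact ⟨n, congrArg Dorroh.snd hn⟩
  have G3 : SetIsNil (A : Set R) → SetIsNil N → SetIsNil K := by
    intro hA hN p hp
    obtain ⟨n, hnA⟩ := hA p.fst ((hKmem p).mp hp).1
    have hq : npowNZ p n ∈ K := hKnpow p hp n
    have hqfst : (npowNZ p n).fst = 0 := by rw [fst_npowNZ, hnA]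
    obtain ⟨m, hm⟩ := hN _ (hsnd0 _ hq hqfst)
    refine ⟨(m + 1) * n + m, ?_⟩
    rw [← npowNZ_comp]
    have hqeq : npowNZ p n = (⟨0, (npowNZ p n).snd⟩ : Dorroh R I) := by
      ext
      · exact hqfst
      · rfl
    rw [hqeq, g_npowNZ, hm]
    rfl
  have G4 : SetIsNil (A : Set R) → SetIsNil N → SetIsNil J := by
    intro hA hN j hj
    obtain ⟨n, hnA⟩ := hA (ψ j) (hψA j hj)
    obtain ⟨m1, m2⟩ := hψnpow j hj n
    rw [hnA, sub_zero] at m2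
    obtain ⟨m, hm⟩ := hN _ ⟨m1, m2⟩
    refine ⟨(m + 1) * n + m, ?_⟩
    rw [← npowNZ_comp]
    exact hm
  have G5 : SetIsNil J → SetIsNil N := fun h x hx => h x hx.1
  exact ⟨⟨fun h => ⟨H1 h, H4 (H1 h) (H2 h)⟩, fun h => H3 h.1 (H5 h.2)⟩,
    ⟨fun h => ⟨H1 h, H2 h⟩, fun h => H3 h.1 h.2⟩,
    ⟨fun h => ⟨G1 h, G4 (G1 h) (G2 h)⟩, fun h => G3 h.1 (G5 h.2)⟩,
    ⟨fun h => ⟨G1 h, G2 h⟩, fun h => G3 h.1 h.2⟩⟩
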